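/- The functions α(r) = 4C/(4C²r² + 1), l(r) = -8C²r/(4C²r² + 1), θ(r) = 2·arctan(2Cr) satisfy the system l' = -α² + 2Cα, α' = αl, θ' = α for every real constant C. -/

import Mathlib

theorem cy_soliton_Q_zero (C : ℝ) :
    let α : ℝ → ℝ := fun r => 4*C/(4*C^2*r^2 + 1)
    let l : ℝ → ℝ := fun r => -8*C^2*r/(4*C^2*r^2 + 1)
    let θ : ℝ → ℝ := fun r => 2 * Real.arctan (2*C*r)
    ∀ r, deriv l r = -(α r)^2 + 2*C*(α r) ∧
      deriv α r = α r * l r ∧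
      deriv θ r = α r := by
  intro α l θ r
  have hD : (4*C^2*r^2 + 1) ≠ 0 := by positivity
  have hDd : HasDerivAt (fun r : ℝ => 4*C^2*r^2 + 1) (8*C^2*r) r := by
    have h : HasDerivAt (fun r : ℝ => r) 1 r := hasDerivAt_id r
    have := ((h.pow 2).const_mul (4*C^2)).add_const 1
    refine this.congr_deriv ?_
    norm_num
    ring
  have hα : HasDerivAt α (-(4*C*(8*C^2*r))/(4*C^2*r^2+1)^2) r := by
    have := ((hasDerivAt_const r (4*C)).div hDd hD)
    refine this.congr_deriv ?_
    ring
  have hl : HasDerivAt l (((-8*C^2)*(4*C^2*r^2+1) - (-8*C^2*r)*(8*C^2*r))/(4*C^2*r^2+1)^2) r := by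
    have hn : HasDerivAt (fun r : ℝ => -8*C^2*r) (-8*C^2) r := by
      have := (hasDerivAt_id r).const_mul (-8*C^2)
      refine this.congr_deriv ?_
      ring
    exact hn.div hDd hD
  have hθ : HasDerivAt θ (2 * ((1/(1+(2*C*r)^2)) * (2*C))) r := by
    have hi : HasDerivAt (fun r : ℝ => 2*C*r) (2*C) r := by
      have := (hasDerivAt_id r).const_mul (2*C)
      refine this.congr_deriv ?_
      ring
    exact ((Real.hasDerivAt_arctan (2*C*r)).comp r hi).const_mul 2
  refine ⟨?_, ?_, ?_⟩
  · rw [hl.deriv]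
    show _ = -(4*C/(4*C^2*r^2 + 1))^2 + 2*C*(4*C/(4*C^2*r^2 + 1))
    field_simp
    ring
  · rw [hα.deriv]
    show _ = (4*C/(4*C^2*r^2 + 1)) * (-8*C^2*r/(4*C^2*r^2 + 1))
    field_simp
  · rw [hθ.deriv]
    show _ = 4*C/(4*C^2*r^2 + 1)
    have : 1+(2*C*r)^2 ≠ 0 := by positivity
    field_simp
    ring
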